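/- For every n ≥ 1, the n-th Bernoulli number b_n equals ∑_{k=1}^{n} (−1)^k · (1/(k+1)) · ∑_{(n_1,…,n_k): n_i ≥ 1, n_1+⋯+n_k = n} multinomial(n; n_1,…,n_k), where multinomial(n; n_1,…,n_k) = n!/(n_1!⋯n_k!). -/

import Mathlib

open PowerSeries Finset

namespace Stmt3Aux

noncomputable def E : PowerSeries ℚ := PowerSeries.exp ℚ - 1

lemma coeff_E (m : ℕ) :
    PowerSeries.coeff m E = if m = 0 then 0 else ((m.factorial : ℚ))⁻¹ := by
  simp only [E, map_sub, PowerSeries.coeff_exp, PowerSeries.coeff_one, Algebra.algebraMap_self,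
    RingHom.id_apply]
  split_ifs with h <;> simp [h]

lemma constantCoeff_E : PowerSeries.constantCoeff E = 0 := by
  have := coeff_E 0
  simpa using this

lemma X_dvd_E : (PowerSeries.X : PowerSeries ℚ) ∣ E :=
  PowerSeries.X_dvd_iff.2 constantCoeff_E

lemma coeff_pow_tuple (φ : PowerSeries ℚ) (k n : ℕ) :
    PowerSeries.coeff n (φ ^ k) =
      ∑ c ∈ Finset.Nat.antidiagonalTuple k n, ∏ i, PowerSeries.coeff (c i) φ := by
  rw [PowerSeries.coeff_pow]
  refine Finset.sum_nbij' (fun l => fun i : Fin k => l i)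
    (fun c => Finsupp.onFinset (range k) (fun j => if h : j < k then c ⟨j, h⟩ else 0) ?_)
    ?_ ?_ ?_ ?_ ?_
  · intro j hj
    rw [Finset.mem_range]
    by_contra h
    simp [h] at hj
  · intro l hl
    simp only [Finset.mem_finsuppAntidiag] at hl
    rw [Finset.Nat.mem_antidiagonalTuple]
    rw [← hl.1, Fin.sum_univ_eq_sum_range]
  · intro c hc
    rw [Finset.Nat.mem_antidiagonalTuple] at hc
    simp only [Finset.mem_finsuppAntidiag]
    constructor
    · rw [← hc]
      rw [← Fin.sum_univ_eq_sum_range (fun j => _)]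
      refine Finset.sum_congr rfl fun i _ => ?_
      simp [i.isLt]
    · intro j hj
      simp only [Finsupp.mem_support_iff, Finsupp.onFinset_apply] at hj
      rw [Finset.mem_range]
      by_contra h
      simp [h] at hj
  · intro l hl
    simp only [Finset.mem_finsuppAntidiag] at hl
    ext j
    simp only [Finsupp.onFinset_apply]
    split_ifs with h
    · rfl
    · symm
      by_contra hne
      have hmem : j ∈ l.support := Finsupp.mem_support_iff.2 hne
      have := hl.2 hmem
      rw [Finset.mem_range] at this
      exact h this
  · intro c hc
    funext i
    simp [i.isLt]
  · intro l hl
    rw [← Fin.prod_univ_eq_prod_range (fun j => PowerSeries.coeff (l j) φ)]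

lemma sum_multinomial_eq (k n : ℕ) :
    ∑ c ∈ (Finset.Nat.antidiagonalTuple k n).filter (fun c => ∀ i, 1 ≤ c i),
        (Nat.multinomial Finset.univ c : ℚ)
      = (n.factorial : ℚ) * PowerSeries.coeff n (E ^ k) := by
  have h1 : (n.factorial : ℚ) * PowerSeries.coeff n (E ^ k)
      = ∑ c ∈ Finset.Nat.antidiagonalTuple k n,
          (n.factorial : ℚ) * ∏ i, PowerSeries.coeff (c i) E := by
    rw [coeff_pow_tuple, Finset.mul_sum]
  have h2 : ∀ c ∈ Finset.Nat.antidiagonalTuple k n,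
      (n.factorial : ℚ) * ∏ i, PowerSeries.coeff (c i) E ≠ 0 → ∀ i, 1 ≤ c i := by
    intro c hc hne
    by_contra hnot
    push_neg at hnot
    obtain ⟨i, hi⟩ := hnot
    have hzero : c i = 0 := by omega
    apply hne
    rw [Finset.prod_eq_zero (Finset.mem_univ i) (by rw [hzero, coeff_E]; simp)]
    ring
  rw [h1, ← Finset.sum_filter_of_ne h2]
  refine Finset.sum_congr rfl fun c hc => ?_
  simp only [Finset.mem_filter, Finset.Nat.mem_antidiagonalTuple] at hc
  obtain ⟨hsum, hpos⟩ := hc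
  have hprod : ∏ i, PowerSeries.coeff (c i) E = (∏ i, ((c i).factorial : ℚ))⁻¹ := by
    rw [← Finset.prod_inv_distrib]
    refine Finset.prod_congr rfl fun i _ => ?_
    rw [coeff_E, if_neg (by have := hpos i; omega : ¬ c i = 0)]
  rw [hprod]
  have hspec := Nat.multinomial_spec Finset.univ c
  have hQ : (∏ i, ((c i).factorial : ℚ)) * (Nat.multinomial Finset.univ c : ℚ)
      = (Nat.factorial n : ℚ) := by
    rw [← hsum]
    exact_mod_cast hspec
  have hne : (∏ i, ((c i).factorial : ℚ)) ≠ 0 := by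
    refine Finset.prod_ne_zero_iff.2 fun i _ => ?_
    exact_mod_cast (Nat.factorial_pos _).ne'
  rw [← hQ, mul_right_comm, mul_inv_cancel₀ hne, one_mul]


lemma derivative_E : PowerSeries.derivative ℚ E = PowerSeries.exp ℚ := by
  have : PowerSeries.derivative ℚ E = PowerSeries.derivative ℚ (PowerSeries.exp ℚ) := by
    rw [E]
    simp [map_sub]
  rw [this]
  ext m
  rw [PowerSeries.coeff_derivative]
  simp only [PowerSeries.coeff_exp, Algebra.algebraMap_self, RingHom.id_apply]
  rw [Nat.factorial_succ]
  have h1 : ((m + 1 : ℕ) : ℚ) ≠ 0 := by positivity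
  have h2 : ((m.factorial : ℚ)) ≠ 0 := by exact_mod_cast m.factorial_pos.ne'
  field_simp
  push_cast
  ring

lemma cancel (f : PowerSeries ℚ) (N : ℕ)
    (h : ∀ m ≤ N + 1, PowerSeries.coeff m (f * E) = 0) :
    ∀ m ≤ N, PowerSeries.coeff m f = 0 := by
  intro m
  induction m using Nat.strong_induction_on with
  | _ m ih =>
    intro hm
    have h1 := h (m + 1) (by omega)
    rw [PowerSeries.coeff_mul] at h1
    rw [Finset.sum_eq_single (m, 1)] at h1
    · rw [coeff_E] at h1
      simpa using h1
    · rintro ⟨a, b⟩ hab hne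
      rw [Finset.HasAntidiagonal.mem_antidiagonal] at hab
      rcases Nat.eq_zero_or_pos b with hb | hb
      · subst hb
        rw [coeff_E]
        simp
      · have ha : a < m := by
          rcases Nat.lt_or_ge a m with h' | h'
          · exact h'
          · exfalso
            apply hne
            have h3 : a = m ∧ b = 1 := by omega
            rw [h3.1, h3.2]
        rw [ih a ha (by omega), zero_mul]
    · intro habs
      exact absurd (by rw [Finset.HasAntidiagonal.mem_antidiagonal] : (m, 1) ∈ Finset.HasAntidiagonal.antidiagonal (m + 1)) habs

lemma coeff_B (n : ℕ) :
    PowerSeries.coeff n (bernoulliPowerSeries ℚ) =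
      ∑ k ∈ range (n + 1), ((-1 : ℚ) ^ k * (1 / (k + 1))) * PowerSeries.coeff n (E ^ k) := by
  set G : PowerSeries ℚ :=
    ∑ k ∈ range (n + 1), ((-1 : ℚ) ^ k * (1 / ((k : ℚ) + 1))) • E ^ k with hG
  have hGE : G * E = ∑ k ∈ range (n + 1), ((-1 : ℚ) ^ k * (1 / ((k : ℚ) + 1))) • E ^ (k + 1) := by
    rw [hG, Finset.sum_mul]
    refine Finset.sum_congr rfl fun k _ => ?_
    rw [smul_mul_assoc, pow_succ]
  have hd : PowerSeries.derivative ℚ (G * E) =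
      (∑ k ∈ range (n + 1), (-E) ^ k) * PowerSeries.exp ℚ := by
    rw [hGE, map_sum, Finset.sum_mul]
    refine Finset.sum_congr rfl fun k _ => ?_
    rw [Derivation.map_smul, Derivation.leibniz_pow, derivative_E, Nat.add_sub_cancel]
    rw [← Nat.cast_smul_eq_nsmul ℚ (k + 1)]
    have hc : ((-1 : ℚ) ^ k * (1 / ((k : ℚ) + 1))) • (((k + 1 : ℕ) : ℚ)) •
        (E ^ k • PowerSeries.exp ℚ) = ((-1 : ℚ) ^ k) • (E ^ k * PowerSeries.exp ℚ) := by
      rw [smul_smul, smul_eq_mul (a := E ^ k)]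
      congr 1
      have : ((k : ℚ) + 1) ≠ 0 := by positivity
      push_cast
      field_simp
    rw [hc, PowerSeries.smul_eq_C_mul, map_pow, map_neg, map_one]
    ring
  have hgeom : (∑ k ∈ range (n + 1), (-E) ^ k) * PowerSeries.exp ℚ = 1 - (-E) ^ (n + 1) := by
    have hg := geom_sum_mul (-E) (n + 1)
    have hexp : (-E : PowerSeries ℚ) - 1 = -(PowerSeries.exp ℚ) := by
      rw [E]; ring
    rw [hexp] at hg
    linear_combination -hg
  have hder : PowerSeries.derivative ℚ (G * E) = 1 - (-E) ^ (n + 1) := hd.trans hgeom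
  have key : ∀ m ≤ n + 1, PowerSeries.coeff m (G * E) = PowerSeries.coeff m PowerSeries.X := by
    intro m hm
    rcases m with _ | m'
    · rw [PowerSeries.coeff_zero_eq_constantCoeff]
      simp [map_mul, constantCoeff_E]
    · have h1 := PowerSeries.coeff_derivative (G * E) m'
      rw [hder] at h1
      have h2 : PowerSeries.coeff m' ((-E) ^ (n + 1)) = 0 := by
        have hdvd : (PowerSeries.X : PowerSeries ℚ) ^ (n + 1) ∣ (-E) ^ (n + 1) :=
          pow_dvd_pow_of_dvd (dvd_neg.2 X_dvd_E) _
        exact (PowerSeries.X_pow_dvd_iff.1 hdvd) m' (by omega)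
      rw [map_sub, h2, sub_zero, PowerSeries.coeff_one] at h1
      rw [PowerSeries.coeff_X]
      rcases Nat.eq_zero_or_pos m' with rfl | hm'
      · rw [if_pos rfl] at h1
        rw [if_pos rfl]
        push_cast at h1
        linarith
      · rw [if_neg (by omega)] at h1
        rw [if_neg (by omega)]
        have hne : ((m' + 1 : ℕ) : ℚ) ≠ 0 := by positivity
        have := mul_eq_zero.1 h1.symm
        rcases this with h | h
        · exact h
        · exact absurd h (by exact_mod_cast hne)
  have hBE : bernoulliPowerSeries ℚ * E = PowerSeries.X := bernoulliPowerSeries_mul_exp_sub_one ℚ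
  have hzero : ∀ m ≤ n, PowerSeries.coeff m (G - bernoulliPowerSeries ℚ) = 0 := by
    apply cancel
    intro m hm
    rw [sub_mul, map_sub, key m hm, hBE, sub_self]
  have hfin := hzero n le_rfl
  rw [map_sub, sub_eq_zero] at hfin
  rw [← hfin, hG, map_sum]
  refine Finset.sum_congr rfl fun k _ => ?_
  rw [PowerSeries.coeff_smul, smul_eq_mul]


end Stmt3Aux

/-- For `n ≥ 1`, `b_n = ∑_{k=1}^n (-1)^k/(k+1) · ∑_{compositions of n into k parts} n!/(n_1!⋯n_k!)`. -/
theorem stmt_3 (n : ℕ) (hn : 1 ≤ n) :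
    bernoulli n = ∑ k ∈ Finset.Icc 1 n, (-1 : ℚ) ^ k * (1 / (k + 1)) *
      ∑ c ∈ (Finset.Nat.antidiagonalTuple k n).filter (fun c => ∀ i, 1 ≤ c i),
        (Nat.multinomial Finset.univ c : ℚ) := by
  have hB : PowerSeries.coeff n (bernoulliPowerSeries ℚ) = bernoulli n / n.factorial := by
    simp [bernoulliPowerSeries, PowerSeries.coeff_mk]
  have h := Stmt3Aux.coeff_B n
  rw [hB] at h
  have hfac : (n.factorial : ℚ) ≠ 0 := by exact_mod_cast n.factorial_pos.ne'
  have h2 : (bernoulli n : ℚ) = (n.factorial : ℚ) *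
      ∑ k ∈ Finset.range (n + 1), ((-1 : ℚ) ^ k * (1 / (k + 1))) *
        PowerSeries.coeff n (Stmt3Aux.E ^ k) := by
    rw [← h, mul_comm, div_mul_cancel₀ _ hfac]
  rw [Finset.mul_sum] at h2
  have h3 : ∀ k, (n.factorial : ℚ) *
      (((-1 : ℚ) ^ k * (1 / (k + 1))) * PowerSeries.coeff n (Stmt3Aux.E ^ k))
      = (-1 : ℚ) ^ k * (1 / (k + 1)) *
        ∑ c ∈ (Finset.Nat.antidiagonalTuple k n).filter (fun c => ∀ i, 1 ≤ c i),
          (Nat.multinomial Finset.univ c : ℚ) := by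
    intro k
    rw [Stmt3Aux.sum_multinomial_eq]
    ring
  rw [Finset.sum_congr rfl (fun k _ => h3 k)] at h2
  rw [h2]
  have hins : Finset.range (n + 1) = insert 0 (Finset.Icc 1 n) := by
    ext x
    simp only [Finset.mem_range, Finset.mem_insert, Finset.mem_Icc]
    omega
  rw [hins, Finset.sum_insert (by simp)]
  have hempty : Finset.Nat.antidiagonalTuple 0 n = ∅ := by
    obtain ⟨m, rfl⟩ := Nat.exists_eq_add_of_le' hn
    exact Finset.Nat.antidiagonalTuple_zero_succ m
  simp [hempty]
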